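/- arXiv:1201.0238 — 3 statements merged into one kernel-verified Lean document; each statement's English description precedes it below -/
import Mathlib

section
/- Let K : ℝ → ℝ be a bounded integrable kernel, and let (X, Y) be a pair of real random variables with a joint density p_{X,Y} bounded by p̄₂. Define Z_X = b^{-1/2} K((x−X)/b) and Z_Y = b^{-1/2} K((x−Y)/b) for b > 0. Then |E[(Z_X − E Z_X)(Z_Y − E Z_Y)]| ≤ C·b, where C depends only on p̄₂, the marginal density bounds, and ∫|K|. -/
open MeasureTheory ProbabilityTheory Filter

/-- From a density representation of a pushforward of a probability measure, the density is
integrable and any pointwise upper bound is positive. -/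
lemma aux_dens {α Ω : Type*} [MeasureSpace α] [MeasurableSpace Ω] (μ : Measure Ω)
    [IsProbabilityMeasure μ] (T : Ω → α) (p : α → ℝ) (M : ℝ) (hbd : ∀ z, p z ≤ M)
    (hmeas : ∀ s : Set α, MeasurableSet s → μ (T ⁻¹' s) = ENNReal.ofReal (∫ z in s, p z)) :
    Integrable p ∧ 0 < M := by
  have h := hmeas Set.univ MeasurableSet.univ
  rw [Set.preimage_univ, measure_univ, setIntegral_univ] at h
  have h1 : ∫ z, p z = 1 := by rwa [eq_comm, ENNReal.ofReal_eq_one] at h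
  have hint : Integrable p := by
    by_contra hc
    rw [integral_undef hc] at h1
    norm_num at h1
  refine ⟨hint, ?_⟩
  by_contra hMp
  push_neg at hMp
  have : ∫ z, p z ≤ 0 := integral_nonpos fun z => (hbd z).trans hMp
  linarith

/-- If a measure is given by a bounded density, it is dominated by a multiple of volume. -/
lemma aux_le_smul {α : Type*} [MeasureSpace α] (ρ : Measure α) (p : α → ℝ) (M : ℝ)
    (hM : 0 < M)
    (hmeas : ∀ s : Set α, MeasurableSet s → ρ s = ENNReal.ofReal (∫ z in s, p z))
    (hint : Integrable p) (hbd : ∀ z, p z ≤ M) :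
    ρ ≤ ENNReal.ofReal M • (volume : Measure α) := by
  rw [Measure.le_iff]
  intro s hs
  rw [hmeas s hs]
  rcases eq_or_ne (volume s) ⊤ with hv | hv
  · simp [Measure.smul_apply, hv, ENNReal.mul_top, ENNReal.ofReal_eq_zero, not_le, hM]
  · have h1 : ∫ z in s, p z ≤ M * (volume s).toReal := by
      calc ∫ z in s, p z ≤ ∫ _ in s, M := by
            refine setIntegral_mono hint.integrableOn ?_ hbd
            exact integrableOn_const hv
        _ = M * (volume s).toReal := by simp [mul_comm, Measure.real]
    calc ENNReal.ofReal (∫ z in s, p z) ≤ ENNReal.ofReal (M * (volume s).toReal) :=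
          ENNReal.ofReal_le_ofReal h1
      _ = ENNReal.ofReal M * volume s := by
          rw [ENNReal.ofReal_mul hM.le, ENNReal.ofReal_toReal hv]
      _ = (ENNReal.ofReal M • (volume : Measure α)) s := rfl

/-- Integral against a measure dominated by `M • volume` is at most `M` times the
volume integral, for nonnegative integrands. -/
lemma aux_integral_le {α : Type*} [MeasureSpace α] (ρ : Measure α) (g : α → ℝ) (M : ℝ)
    (hM : 0 ≤ M) (hρ : ρ ≤ ENNReal.ofReal M • (volume : Measure α))
    (hg : ∀ z, 0 ≤ g z) (hgint : Integrable g) (hgm : AEStronglyMeasurable g ρ) :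
    ∫ z, g z ∂ρ ≤ M * ∫ z, g z := by
  have h1 : ∫ z, g z ∂ρ = (∫⁻ z, ENNReal.ofReal (g z) ∂ρ).toReal :=
    integral_eq_lintegral_of_nonneg_ae (ae_of_all _ hg) hgm
  have h2 : ENNReal.ofReal (∫ z, g z) = ∫⁻ z, ENNReal.ofReal (g z) :=
    ofReal_integral_eq_lintegral_ofReal hgint (ae_of_all _ hg)
  have h3 : (∫⁻ z, ENNReal.ofReal (g z) ∂ρ) ≤ ENNReal.ofReal M * ENNReal.ofReal (∫ z, g z) := by
    rw [h2]
    calc (∫⁻ z, ENNReal.ofReal (g z) ∂ρ)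
        ≤ ∫⁻ z, ENNReal.ofReal (g z) ∂(ENNReal.ofReal M • (volume : Measure α)) :=
          lintegral_mono' hρ le_rfl
      _ = ENNReal.ofReal M * ∫⁻ z, ENNReal.ofReal (g z) := by
          rw [lintegral_smul_measure, smul_eq_mul]
  rw [h1]
  calc (∫⁻ z, ENNReal.ofReal (g z) ∂ρ).toReal
      ≤ (ENNReal.ofReal M * ENNReal.ofReal (∫ z, g z)).toReal := by
        refine ENNReal.toReal_mono ?_ h3
        exact ENNReal.mul_ne_top ENNReal.ofReal_ne_top ENNReal.ofReal_ne_top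
    _ = M * ∫ z, g z := by
        rw [ENNReal.toReal_mul, ENNReal.toReal_ofReal hM,
          ENNReal.toReal_ofReal (integral_nonneg hg)]

set_option maxHeartbeats 1000000 in
/-- Covariance bound for kernel variables: if `(X, Y)` has a joint density bounded by `pbar2`
and marginal densities bounded by `pbar1`, then
`|E[(Z_X - E Z_X)(Z_Y - E Z_Y)]| ≤ (pbar2 (∫|K|)² + pbar1² (∫|K|)²) * b`,
where `Z_X = b^{-1/2} K((x - X)/b)` and similarly for `Y`. -/
theorem stmt3 {Ω : Type*} [MeasurableSpace Ω] (μ : Measure Ω) [IsProbabilityMeasure μ]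
    (X Y : Ω → ℝ) (hX : Measurable X) (hY : Measurable Y)
    (K : ℝ → ℝ) (hKint : Integrable K) (hKbd : ∃ M : ℝ, ∀ t, |K t| ≤ M)
    (p2 : ℝ × ℝ → ℝ) (pbar2 : ℝ) (hp2 : ∀ z, p2 z ≤ pbar2)
    (hdens2 : ∀ s : Set (ℝ × ℝ), MeasurableSet s →
      μ ((fun ω => (X ω, Y ω)) ⁻¹' s) = ENNReal.ofReal (∫ z in s, p2 z))
    (pX pY : ℝ → ℝ) (pbar1 : ℝ) (hpX : ∀ y, pX y ≤ pbar1) (hpY : ∀ y, pY y ≤ pbar1)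
    (hdensX : ∀ s : Set ℝ, MeasurableSet s →
      μ (X ⁻¹' s) = ENNReal.ofReal (∫ y in s, pX y))
    (hdensY : ∀ s : Set ℝ, MeasurableSet s →
      μ (Y ⁻¹' s) = ENNReal.ofReal (∫ y in s, pY y))
    (b : ℝ) (hb : 0 < b) (x : ℝ) :
    |∫ ω, ((1 / Real.sqrt b) * K ((x - X ω) / b)
            - ∫ ω', (1 / Real.sqrt b) * K ((x - X ω') / b) ∂μ)
         * ((1 / Real.sqrt b) * K ((x - Y ω) / b)
            - ∫ ω', (1 / Real.sqrt b) * K ((x - Y ω') / b) ∂μ) ∂μ|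
      ≤ (pbar2 * (∫ t, |K t|) ^ 2 + pbar1 ^ 2 * (∫ t, |K t|) ^ 2) * b := by
  obtain ⟨M, hM⟩ := hKbd
  have hM0 : 0 ≤ M := le_trans (abs_nonneg _) (hM 0)
  set s := Real.sqrt b with hsdef
  have hs : 0 < s := Real.sqrt_pos.2 hb
  have hs2 : s * s = b := Real.mul_self_sqrt hb.le
  set I := ∫ t, |K t| with hIdef
  have hI0 : 0 ≤ I := integral_nonneg fun t => abs_nonneg _
  -- basic kernel functions
  set g0 : ℝ → ℝ := fun u => K ((x - u) / b) with hg0def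
  have hg0int : Integrable g0 := (hKint.comp_div hb.ne').comp_sub_left x
  set f1 : ℝ → ℝ := fun u => |K ((x - u) / b)| with hf1def
  have hf1int : Integrable f1 := hg0int.abs
  have hf1nn : ∀ u, 0 ≤ f1 u := fun u => abs_nonneg _
  have hIf1 : ∫ u, f1 u = b * I := by
    calc ∫ u, f1 u = ∫ u, (fun v => |K (v / b)|) (x - u) := rfl
      _ = ∫ v, |K (v / b)| := integral_sub_left_eq_self (fun v => |K (v / b)|) volume x
      _ = |b| • ∫ t, |K t| := Measure.integral_comp_div (fun t => |K t|) b
      _ = b * I := by rw [abs_of_pos hb]; simp [smul_eq_mul, hIdef]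
  -- densities facts
  obtain ⟨hpXint, hpbar1⟩ := aux_dens μ X pX pbar1 hpX hdensX
  obtain ⟨hpYint, _⟩ := aux_dens μ Y pY pbar1 hpY hdensY
  obtain ⟨hp2int, hpbar2⟩ := aux_dens μ (fun ω => (X ω, Y ω)) p2 pbar2 hp2 hdens2
  -- pushforward measures
  have hXY : Measurable fun ω => (X ω, Y ω) := hX.prodMk hY
  set νX := Measure.map X μ with hνXdef
  set νY := Measure.map Y μ with hνYdef
  set ν2 := Measure.map (fun ω => (X ω, Y ω)) μ with hν2def
  have hνXle : νX ≤ ENNReal.ofReal pbar1 • (volume : Measure ℝ) :=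
    aux_le_smul νX pX pbar1 hpbar1
      (fun u hu => by rw [hνXdef, Measure.map_apply hX hu]; exact hdensX u hu) hpXint hpX
  have hνYle : νY ≤ ENNReal.ofReal pbar1 • (volume : Measure ℝ) :=
    aux_le_smul νY pY pbar1 hpbar1
      (fun u hu => by rw [hνYdef, Measure.map_apply hY hu]; exact hdensY u hu) hpYint hpY
  have hν2le : ν2 ≤ ENNReal.ofReal pbar2 • (volume : Measure (ℝ × ℝ)) :=
    aux_le_smul ν2 p2 pbar2 hpbar2
      (fun u hu => by rw [hν2def, Measure.map_apply hXY hu]; exact hdens2 u hu) hp2int hp2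
  have hacX : νX ≪ (volume : Measure ℝ) := Measure.absolutelyContinuous_of_le_smul hνXle
  have hacY : νY ≪ (volume : Measure ℝ) := Measure.absolutelyContinuous_of_le_smul hνYle
  have hac2 : ν2 ≪ (volume : Measure (ℝ × ℝ)) := Measure.absolutelyContinuous_of_le_smul hν2le
  -- the random variables
  set Z : Ω → ℝ := fun ω => (1 / Real.sqrt b) * K ((x - X ω) / b) with hZdef
  set W : Ω → ℝ := fun ω => (1 / Real.sqrt b) * K ((x - Y ω) / b) with hWdef
  have hZm : AEStronglyMeasurable Z μ := by
    have h1 : AEStronglyMeasurable (g0 ∘ X) μ :=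
      (hg0int.aestronglyMeasurable.mono_ac hacX).comp_aemeasurable hX.aemeasurable
    exact h1.const_mul _
  have hWm : AEStronglyMeasurable W μ := by
    have h1 : AEStronglyMeasurable (g0 ∘ Y) μ :=
      (hg0int.aestronglyMeasurable.mono_ac hacY).comp_aemeasurable hY.aemeasurable
    exact h1.const_mul _
  have hZbd : ∀ ω, |Z ω| ≤ (1 / s) * M := by
    intro ω
    rw [hZdef]
    simp only [abs_mul]
    rw [abs_of_nonneg (by positivity : (0:ℝ) ≤ 1 / Real.sqrt b)]
    exact mul_le_mul_of_nonneg_left (hM _) (by positivity)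
  have hWbd : ∀ ω, |W ω| ≤ (1 / s) * M := by
    intro ω
    rw [hWdef]
    simp only [abs_mul]
    rw [abs_of_nonneg (by positivity : (0:ℝ) ≤ 1 / Real.sqrt b)]
    exact mul_le_mul_of_nonneg_left (hM _) (by positivity)
  have hZint : Integrable Z μ :=
    Integrable.mono' (integrable_const ((1 / s) * M)) hZm (ae_of_all _ fun ω => hZbd ω)
  have hWint : Integrable W μ :=
    Integrable.mono' (integrable_const ((1 / s) * M)) hWm (ae_of_all _ fun ω => hWbd ω)
  have hZWint : Integrable (fun ω => Z ω * W ω) μ := by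
    refine Integrable.mono' (integrable_const (((1 / s) * M) * ((1 / s) * M)))
      (hZm.mul hWm) (ae_of_all _ fun ω => ?_)
    have := mul_le_mul (hZbd ω) (hWbd ω) (abs_nonneg _) (by positivity)
    simpa [abs_mul] using this
  set c := ∫ ω, Z ω ∂μ with hcdef
  set d := ∫ ω, W ω ∂μ with hddef
  -- expansion of covariance
  have hexp : ∫ ω, (Z ω - c) * (W ω - d) ∂μ = (∫ ω, Z ω * W ω ∂μ) - c * d := by
    have heq : ∀ ω, (Z ω - c) * (W ω - d) = (Z ω * W ω - c * W ω) - (d * Z ω - c * d) :=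
      fun ω => by ring
    have h1 : Integrable (fun ω => Z ω * W ω - c * W ω) μ := hZWint.sub (hWint.const_mul c)
    have h2 : Integrable (fun ω => d * Z ω - c * d) μ :=
      (hZint.const_mul d).sub (integrable_const (c * d))
    calc ∫ ω, (Z ω - c) * (W ω - d) ∂μ
        = ∫ ω, ((Z ω * W ω - c * W ω) - (d * Z ω - c * d)) ∂μ := by simp_rw [heq]
      _ = (∫ ω, (Z ω * W ω - c * W ω) ∂μ) - ∫ ω, (d * Z ω - c * d) ∂μ := integral_sub h1 h2
      _ = ((∫ ω, Z ω * W ω ∂μ) - ∫ ω, c * W ω ∂μ)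
          - ((∫ ω, d * Z ω ∂μ) - ∫ ω, (c * d : ℝ) ∂μ) := by
            rw [integral_sub hZWint (hWint.const_mul c),
              integral_sub (hZint.const_mul d) (integrable_const (c * d))]
      _ = (∫ ω, Z ω * W ω ∂μ) - c * d := by
            rw [integral_const_mul c W, integral_const_mul d Z, integral_const, probReal_univ]
            simp only [ENNReal.toReal_one, one_smul]
            ring
  -- bound on E|Z| via marginal density
  have hIntf1X : Integrable (fun ω => f1 (X ω)) μ := by
    refine Integrable.mono' (integrable_const M) ?_ (ae_of_all _ fun ω => ?_)
    · exact (hf1int.aestronglyMeasurable.mono_ac hacX).comp_aemeasurable hX.aemeasurable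
    · simpa [hf1def, abs_abs] using hM ((x - X ω) / b)
  have hIntf1Y : Integrable (fun ω => f1 (Y ω)) μ := by
    refine Integrable.mono' (integrable_const M) ?_ (ae_of_all _ fun ω => ?_)
    · exact (hf1int.aestronglyMeasurable.mono_ac hacY).comp_aemeasurable hY.aemeasurable
    · simpa [hf1def, abs_abs] using hM ((x - Y ω) / b)
  have hBX : ∫ ω, f1 (X ω) ∂μ ≤ pbar1 * (b * I) := by
    have hmap : ∫ ω, f1 (X ω) ∂μ = ∫ u, f1 u ∂νX :=
      (integral_map hX.aemeasurable (hf1int.aestronglyMeasurable.mono_ac hacX)).symm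
    rw [hmap]
    calc ∫ u, f1 u ∂νX ≤ pbar1 * ∫ u, f1 u :=
          aux_integral_le νX f1 pbar1 hpbar1.le hνXle hf1nn hf1int
            (hf1int.aestronglyMeasurable.mono_ac hacX)
      _ = pbar1 * (b * I) := by rw [hIf1]
  have hBY : ∫ ω, f1 (Y ω) ∂μ ≤ pbar1 * (b * I) := by
    have hmap : ∫ ω, f1 (Y ω) ∂μ = ∫ u, f1 u ∂νY :=
      (integral_map hY.aemeasurable (hf1int.aestronglyMeasurable.mono_ac hacY)).symm
    rw [hmap]
    calc ∫ u, f1 u ∂νY ≤ pbar1 * ∫ u, f1 u :=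
          aux_integral_le νY f1 pbar1 hpbar1.le hνYle hf1nn hf1int
            (hf1int.aestronglyMeasurable.mono_ac hacY)
      _ = pbar1 * (b * I) := by rw [hIf1]
  -- bound on E|ZW| via joint density
  have hA : ∫ ω, f1 (X ω) * f1 (Y ω) ∂μ ≤ pbar2 * (b * I) ^ 2 := by
    set F : ℝ × ℝ → ℝ := fun z => f1 z.1 * f1 z.2 with hFdef
    have hFint : Integrable F := by
      have h1 : Integrable F ((volume : Measure ℝ).prod volume) := hf1int.mul_prod hf1int
      rwa [← Measure.volume_eq_prod ℝ ℝ] at h1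
    have hFν2 : AEStronglyMeasurable F ν2 := hFint.aestronglyMeasurable.mono_ac hac2
    have hmap : ∫ ω, f1 (X ω) * f1 (Y ω) ∂μ = ∫ z, F z ∂ν2 :=
      (integral_map hXY.aemeasurable hFν2).symm
    rw [hmap]
    calc ∫ z, F z ∂ν2 ≤ pbar2 * ∫ z, F z :=
          aux_integral_le ν2 F pbar2 hpbar2.le hν2le
            (fun z => mul_nonneg (hf1nn _) (hf1nn _)) hFint hFν2
      _ = pbar2 * (b * I) ^ 2 := by
          have : ∫ z, F z = (∫ u, f1 u) * ∫ u, f1 u := by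
            rw [Measure.volume_eq_prod ℝ ℝ]
            exact integral_prod_mul f1 f1
          rw [this, hIf1]; ring
  -- putting things together
  have habsint : ∀ f : Ω → ℝ, |∫ ω, f ω ∂μ| ≤ ∫ ω, |f ω| ∂μ := fun f => by
    simpa [Real.norm_eq_abs] using norm_integral_le_integral_norm (μ := μ) f
  have habsZW : ∀ ω, |Z ω * W ω| = (1 / b) * (f1 (X ω) * f1 (Y ω)) := by
    intro ω
    rw [hZdef, hWdef]
    simp only [abs_mul]
    rw [abs_of_nonneg (by positivity : (0:ℝ) ≤ 1 / Real.sqrt b)]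
    have h1b : (1 / Real.sqrt b) * (1 / Real.sqrt b) = 1 / b := by
      rw [div_mul_div_comm, one_mul, ← hsdef, hs2]
    calc 1 / Real.sqrt b * |K ((x - X ω) / b)| * (1 / Real.sqrt b * |K ((x - Y ω) / b)|)
        = (1 / Real.sqrt b * (1 / Real.sqrt b)) * (|K ((x - X ω) / b)| * |K ((x - Y ω) / b)|) :=
          by ring
      _ = (1 / b) * (f1 (X ω) * f1 (Y ω)) := by rw [h1b]
  have hterm1 : |∫ ω, Z ω * W ω ∂μ| ≤ (1 / b) * (pbar2 * (b * I) ^ 2) := by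
    calc |∫ ω, Z ω * W ω ∂μ| ≤ ∫ ω, |Z ω * W ω| ∂μ := habsint _
      _ = ∫ ω, (1 / b) * (f1 (X ω) * f1 (Y ω)) ∂μ := by simp_rw [habsZW]
      _ = (1 / b) * ∫ ω, f1 (X ω) * f1 (Y ω) ∂μ := integral_const_mul _ _
      _ ≤ (1 / b) * (pbar2 * (b * I) ^ 2) :=
          mul_le_mul_of_nonneg_left hA (by positivity)
  have habsZ : ∀ ω, |Z ω| = (1 / s) * f1 (X ω) := by
    intro ω
    rw [hZdef]
    simp only [abs_mul]
    rw [abs_of_nonneg (by positivity : (0:ℝ) ≤ 1 / Real.sqrt b)]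
  have habsW : ∀ ω, |W ω| = (1 / s) * f1 (Y ω) := by
    intro ω
    rw [hWdef]
    simp only [abs_mul]
    rw [abs_of_nonneg (by positivity : (0:ℝ) ≤ 1 / Real.sqrt b)]
  have hcbd : |c| ≤ (1 / s) * (pbar1 * (b * I)) := by
    calc |c| ≤ ∫ ω, |Z ω| ∂μ := habsint _
      _ = (1 / s) * ∫ ω, f1 (X ω) ∂μ := by simp_rw [habsZ]; exact integral_const_mul _ _
      _ ≤ (1 / s) * (pbar1 * (b * I)) := mul_le_mul_of_nonneg_left hBX (by positivity)
  have hdbd : |d| ≤ (1 / s) * (pbar1 * (b * I)) := by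
    calc |d| ≤ ∫ ω, |W ω| ∂μ := habsint _
      _ = (1 / s) * ∫ ω, f1 (Y ω) ∂μ := by simp_rw [habsW]; exact integral_const_mul _ _
      _ ≤ (1 / s) * (pbar1 * (b * I)) := mul_le_mul_of_nonneg_left hBY (by positivity)
  have hcd : |c * d| ≤ ((1 / s) * (pbar1 * (b * I))) ^ 2 := by
    rw [abs_mul, sq]
    exact mul_le_mul hcbd hdbd (abs_nonneg _) (by positivity)
  calc |∫ ω, (Z ω - c) * (W ω - d) ∂μ|
      = |(∫ ω, Z ω * W ω ∂μ) - c * d| := by rw [hexp]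
    _ ≤ |∫ ω, Z ω * W ω ∂μ| + |c * d| := abs_sub _ _
    _ ≤ (1 / b) * (pbar2 * (b * I) ^ 2) + ((1 / s) * (pbar1 * (b * I))) ^ 2 :=
        add_le_add hterm1 hcd
    _ = (pbar2 * I ^ 2 + pbar1 ^ 2 * I ^ 2) * b := by
        field_simp
        rw [← hs2]; ring
end

section
/- Let K : ℝ → ℝ be an L-Lipschitz integrable kernel, and let X, X̃ be real random variables with X = X̃ + W, where X̃ has bounded density p̃ (bound p̄). Then for b > 0, |E[K((x−X)/b)·K((x−X̃)/b)] − E[K²((x−X̃)/b)]| ≤ L · (E|W| / b) · b · p̄ · ∫|K(y)| dy. -/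
open MeasureTheory ProbabilityTheory Filter
open scoped NNReal ENNReal

lemma lipschitz_integrable_bdd (K : ℝ → ℝ) (L : NNReal) (hlip : LipschitzWith L K)
    (hKint : Integrable K) : ∃ C : ℝ, 0 ≤ C ∧ ∀ y, |K y| ≤ C := by
  set L' : ℝ := (L : ℝ) + 1 with hL'
  have hL'pos : 0 < L' := by positivity
  have hlipR : ∀ u v : ℝ, |K u - K v| ≤ L' * |u - v| := by
    intro u v
    have h1 := hlip.dist_le_mul u v
    rw [Real.dist_eq, Real.dist_eq] at h1
    nlinarith [abs_nonneg (u - v)]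
  set I := ∫ y, |K y| with hI
  have hInn : 0 ≤ I := integral_nonneg fun y => abs_nonneg _
  refine ⟨Real.sqrt (2 * L' * I), Real.sqrt_nonneg _, fun y => ?_⟩
  set M := |K y| with hM
  have hMnn : 0 ≤ M := abs_nonneg _
  have key : M ^ 2 ≤ 2 * L' * I := by
    rcases eq_or_lt_of_le hMnn with h0 | hMpos
    · nlinarith
    set r := M / (2 * L') with hr
    have hrpos : 0 < r := by positivity
    have hlow : ∀ t ∈ Set.Icc (y - r) (y + r), M / 2 ≤ |K t| := by
      intro t ht
      have h1 : |K y - K t| ≤ L' * |y - t| := hlipR y t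
      have h2 : |y - t| ≤ r := by
        rw [abs_sub_le_iff]
        exact ⟨by linarith [ht.1], by linarith [ht.2]⟩
      have h3 : M - |K t| ≤ L' * r :=
        le_trans (le_trans (abs_sub_abs_le_abs_sub _ _) h1) (by nlinarith)
      have hLr : L' * r = M / 2 := by
        rw [hr]; field_simp
      have h4 : M - |K t| ≤ M / 2 := by
        calc M - |K t| ≤ L' * r := h3
          _ = M / 2 := hLr
      linarith
    have hint : IntegrableOn (fun t => |K t|) (Set.Icc (y - r) (y + r)) volume :=
      hKint.abs.integrableOn
    have h3 : ∫ _t in Set.Icc (y - r) (y + r), (M / 2 : ℝ) ≤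
        ∫ t in Set.Icc (y - r) (y + r), |K t| :=
      setIntegral_mono_on ((integrableOn_const_iff (C := M / 2)).mpr (Or.inr (by
        rw [Real.volume_Icc]; exact ENNReal.ofReal_lt_top))) hint measurableSet_Icc
        (fun t ht => hlow t ht)
    have h4 : ∫ _t in Set.Icc (y - r) (y + r), (M / 2 : ℝ) = (2 * r) * (M / 2) := by
      rw [setIntegral_const, Real.volume_real_Icc, smul_eq_mul,
        max_eq_left (by linarith)]
      ring_nf
    have h5 : ∫ t in Set.Icc (y - r) (y + r), |K t| ≤ I :=
      setIntegral_le_integral hKint.abs (Eventually.of_forall fun t => abs_nonneg _)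
    have h6 : (2 * r) * (M / 2) ≤ I := by linarith
    have h7 : r * M ≤ I := by linarith
    rw [hr] at h7
    have h8 : M ^ 2 / (2 * L') ≤ I := by
      calc M ^ 2 / (2 * L') = M / (2 * L') * M := by ring
        _ ≤ I := h7
    have h9 := (div_le_iff₀ (show (0:ℝ) < 2 * L' by positivity)).mp h8
    linarith
  calc M = Real.sqrt (M ^ 2) := (Real.sqrt_sq hMnn).symm
    _ ≤ Real.sqrt (2 * L' * I) := Real.sqrt_le_sqrt key

lemma density_bound {Ω : Type*} [MeasurableSpace Ω] (μ : Measure Ω) [IsProbabilityMeasure μ]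
    (Xt : Ω → ℝ) (hXt : Measurable Xt) (pt : ℝ → ℝ) (pbar : ℝ) (hpt : ∀ y, pt y ≤ pbar)
    (hdens : ∀ s : Set ℝ, MeasurableSet s →
      μ (Xt ⁻¹' s) = ENNReal.ofReal (∫ y in s, pt y))
    (h : ℝ → ℝ) (hhcont : Continuous h) (hhnn : ∀ y, 0 ≤ h y) (hhint : Integrable h) :
    ∫ ω, h (Xt ω) ∂μ ≤ pbar * ∫ y, h y := by
  have h1 := hdens Set.univ MeasurableSet.univ
  rw [Set.preimage_univ, measure_univ, Measure.restrict_univ] at h1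
  have hpt1 : ∫ y, pt y = 1 := ENNReal.ofReal_eq_one.mp h1.symm
  have hptint : Integrable pt := by
    by_contra hc
    rw [integral_undef hc] at hpt1; norm_num at hpt1
  have hsm := hptint.aestronglyMeasurable
  set g : ℝ → ℝ := fun y => min (hsm.mk pt y) pbar with hgdef
  have hgmeas : Measurable g := hsm.stronglyMeasurable_mk.measurable.min measurable_const
  have hgae : pt =ᵐ[volume] g := by
    filter_upwards [hsm.ae_eq_mk] with y hy
    rw [hgdef]; simp only [← hy]; exact (min_eq_left (hpt y)).symm
  have hgle : ∀ y, g y ≤ pbar := fun y => min_le_right _ _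
  have hgint : Integrable g := hptint.congr hgae
  have hg1 : ∫ y, g y = 1 := by rw [← integral_congr_ae hgae, hpt1]
  -- g nonneg a.e.
  have hgnn : ∀ᵐ y, 0 ≤ g y := by
    set s := {y : ℝ | g y < 0} with hsdef
    have hs : MeasurableSet s := measurableSet_lt hgmeas measurable_const
    have e1 : ∫ y in s, pt y = ∫ y in s, g y := integral_congr_ae (ae_restrict_of_ae hgae)
    have e2 : ∫ y in s, g y ≤ 0 := setIntegral_nonpos hs (fun y hy => le_of_lt hy)
    have esum : (∫ y in s, pt y) + ∫ y in sᶜ, pt y = 1 := by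
      rw [integral_add_compl hs hptint, hpt1]
    have e6 : ENNReal.ofReal (∫ y in sᶜ, pt y) ≤ 1 := by
      rw [← hdens sᶜ hs.compl]; exact prob_le_one
    have e7 : ∫ y in sᶜ, pt y ≤ 1 := ENNReal.ofReal_le_one.mp e6
    have e8 : ∫ y in s, g y = 0 := by rw [← e1]; linarith
    have hvol : volume s = 0 := by
      by_contra hv
      have hsupp : Function.support (fun y => -g y) ∩ s = s := by
        ext y
        simp only [Set.mem_inter_iff, Function.mem_support, ne_eq, neg_eq_zero,
          and_iff_right_iff_imp]
        intro hy
        exact ne_of_lt hy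
      have hpos : 0 < volume (Function.support (fun y => -g y) ∩ s) := by
        rw [hsupp]; exact zero_lt_iff.mpr hv
      have hnnres : 0 ≤ᵐ[volume.restrict s] fun y => -g y := by
        filter_upwards [ae_restrict_mem hs] with y hy
        exact neg_nonneg.mpr (le_of_lt hy)
      have := (setIntegral_pos_iff_support_of_nonneg_ae hnnres
        hgint.neg.integrableOn).mpr hpos
      rw [integral_neg, e8] at this
      simp at this
    rw [ae_iff]
    have hset : {y : ℝ | ¬ 0 ≤ g y} = s := by
      rw [hsdef]; ext y; simp [not_le]
    rw [hset]; exact hvol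
  -- pbar nonneg
  have hpbar : 0 ≤ pbar := by
    by_contra hpb
    push_neg at hpb
    have hfalse : ∀ᵐ y : ℝ, False := by
      filter_upwards [hgnn] with y hy
      exact absurd (lt_of_le_of_lt (hy.trans (hgle y)) hpb) (lt_irrefl _)
    have h2 : (volume : Measure ℝ) Set.univ = 0 := by
      simpa [ae_iff] using hfalse
    simp [Real.volume_univ] at h2
  -- identify the law
  set q : ℝ → ℝ≥0 := fun y => (g y).toNNReal with hqdef
  have hq : Measurable q := hgmeas.real_toNNReal
  have hptnn : ∀ᵐ y, 0 ≤ pt y := by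
    filter_upwards [hgnn, hgae] with y h1 h2; rw [h2]; exact h1
  have hmap : μ.map Xt = volume.withDensity (fun y => (q y : ℝ≥0∞)) := by
    ext s hs
    rw [Measure.map_apply hXt hs, hdens s hs, withDensity_apply _ hs,
      ofReal_integral_eq_lintegral_ofReal hptint.integrableOn (ae_restrict_of_ae hptnn)]
    refine lintegral_congr_ae ?_
    filter_upwards [ae_restrict_of_ae hgae] with y hy
    rw [hy]; rfl
  have hhsm : AEStronglyMeasurable h (μ.map Xt) := hhcont.aestronglyMeasurable
  have hqcoe : Measurable fun y => (q y : ℝ) := measurable_coe_nnreal_real.comp hq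
  have hint1 : Integrable (fun y => (q y : ℝ) • h y) := by
    refine Integrable.mono' (hhint.const_mul pbar) ?_ ?_
    · exact (hqcoe.mul hhcont.measurable).aestronglyMeasurable
    · refine Eventually.of_forall fun y => ?_
      rw [smul_eq_mul, Real.norm_eq_abs, abs_mul, abs_of_nonneg (NNReal.coe_nonneg _),
        abs_of_nonneg (hhnn y)]
      refine mul_le_mul_of_nonneg_right ?_ (hhnn y)
      rw [hqdef, Real.coe_toNNReal']
      exact max_le (hgle y) hpbar
  calc ∫ ω, h (Xt ω) ∂μ = ∫ y, h y ∂(μ.map Xt) := (integral_map hXt.aemeasurable hhsm).symm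
    _ = ∫ y, (q y : ℝ) • h y := by
        rw [hmap, integral_withDensity_eq_integral_smul hq]
        simp [NNReal.smul_def]
    _ ≤ ∫ y, pbar * h y := by
        refine integral_mono hint1 (hhint.const_mul pbar) fun y => ?_
        rw [smul_eq_mul]
        refine mul_le_mul_of_nonneg_right ?_ (hhnn y)
        rw [hqdef, Real.coe_toNNReal']
        exact max_le (hgle y) hpbar
    _ = pbar * ∫ y, h y := integral_const_mul pbar h

/-- For an `L`-Lipschitz integrable kernel `K` and `X = X̃ + W` with `X̃` having density
bounded by `pbar`:
`|E[K((x-X)/b) K((x-X̃)/b)] - E[K²((x-X̃)/b)]| ≤ L (E|W|/b) b pbar ∫|K|`. -/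
theorem stmt14 {Ω : Type*} [MeasurableSpace Ω] (μ : Measure Ω) [IsProbabilityMeasure μ]
    (Xt W : Ω → ℝ) (hXt : Measurable Xt) (hW : Measurable W)
    (hindep : IndepFun Xt W μ) (hWint : Integrable W μ)
    (K : ℝ → ℝ) (L : NNReal) (hlip : LipschitzWith L K) (hKint : Integrable K)
    (pt : ℝ → ℝ) (pbar : ℝ) (hpt : ∀ y, pt y ≤ pbar)
    (hdens : ∀ s : Set ℝ, MeasurableSet s →
      μ (Xt ⁻¹' s) = ENNReal.ofReal (∫ y in s, pt y))
    (b : ℝ) (hb : 0 < b) (x : ℝ) :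
    |(∫ ω, K ((x - (Xt ω + W ω)) / b) * K ((x - Xt ω) / b) ∂μ)
        - ∫ ω, (K ((x - Xt ω) / b)) ^ 2 ∂μ|
      ≤ (L : ℝ) * ((∫ ω, |W ω| ∂μ) / b) * b * pbar * ∫ y, |K y| := by
  obtain ⟨C, hC0, hC⟩ := lipschitz_integrable_bdd K L hlip hKint
  have hKcont : Continuous K := hlip.continuous
  have hb' : b ≠ 0 := ne_of_gt hb
  set h : ℝ → ℝ := fun y => |K ((x - y) / b)| with hhdef
  have hhcont : Continuous h :=
    (hKcont.comp ((continuous_const.sub continuous_id).div_const b)).abs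
  have hhnn : ∀ y, 0 ≤ h y := fun y => abs_nonneg _
  have hhint : Integrable h := by
    have h1 : Integrable (fun u => |K (u / b)|) := hKint.abs.comp_div hb'
    exact h1.comp_sub_left x
  have hhval : ∫ y, h y = b * ∫ y, |K y| := by
    have e1 : ∫ y, h y = ∫ y, (fun u => |K (u / b)|) (x - y) := rfl
    rw [e1, integral_sub_left_eq_self (fun u => |K (u / b)|) volume x,
      Measure.integral_comp_div (fun u => |K u|) b, abs_of_pos hb, smul_eq_mul]
  have hB : ∫ ω, h (Xt ω) ∂μ ≤ pbar * (b * ∫ y, |K y|) := by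
    have := density_bound μ Xt hXt pt pbar hpt hdens h hhcont hhnn hhint
    rwa [hhval] at this
  have hBnn : 0 ≤ ∫ ω, h (Xt ω) ∂μ := integral_nonneg fun ω => hhnn _
  have hWnn : 0 ≤ ∫ ω, |W ω| ∂μ := integral_nonneg fun ω => abs_nonneg _
  have hmXb : Measurable fun ω => (x - Xt ω) / b := (measurable_const.sub hXt).div_const b
  have hKXt : Measurable fun ω => K ((x - Xt ω) / b) := hKcont.measurable.comp hmXb
  have hKX : Measurable fun ω => K ((x - (Xt ω + W ω)) / b) :=
    hKcont.measurable.comp ((measurable_const.sub (hXt.add hW)).div_const b)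
  have hFint : Integrable (fun ω => K ((x - (Xt ω + W ω)) / b) * K ((x - Xt ω) / b)) μ := by
    refine Integrable.mono' (integrable_const (C * C)) ((hKX.mul hKXt).aestronglyMeasurable)
      (Eventually.of_forall fun ω => ?_)
    rw [Real.norm_eq_abs, abs_mul]
    exact mul_le_mul (hC _) (hC _) (abs_nonneg _) hC0
  have hGint : Integrable (fun ω => (K ((x - Xt ω) / b)) ^ 2) μ := by
    refine Integrable.mono' (integrable_const (C * C)) ((hKXt.pow_const 2).aestronglyMeasurable)
      (Eventually.of_forall fun ω => ?_)
    rw [Real.norm_eq_abs, abs_pow, sq]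
    exact mul_le_mul (hC _) (hC _) (abs_nonneg _) hC0
  rw [← integral_sub hFint hGint]
  set φ : Ω → ℝ := fun ω => ((L : ℝ) / b * |W ω|) * h (Xt ω) with hφdef
  have hφmeas : Measurable φ :=
    (measurable_const.mul hW.abs).mul (hhcont.measurable.comp hXt)
  have hφint : Integrable φ μ := by
    refine Integrable.mono' (hWint.abs.const_mul ((L : ℝ) / b * C))
      hφmeas.aestronglyMeasurable (Eventually.of_forall fun ω => ?_)
    rw [Real.norm_eq_abs, hφdef]
    have h1 : |((L : ℝ) / b * |W ω|) * h (Xt ω)| = ((L : ℝ) / b * |W ω|) * h (Xt ω) := by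
      refine abs_of_nonneg (mul_nonneg (mul_nonneg ?_ (abs_nonneg _)) (hhnn _))
      positivity
    rw [h1]
    calc ((L : ℝ) / b * |W ω|) * h (Xt ω) ≤ ((L : ℝ) / b * |W ω|) * C :=
          mul_le_mul_of_nonneg_left (hC _) (by positivity)
      _ = (L : ℝ) / b * C * |W ω| := by ring
  have step1 : |∫ ω, (K ((x - (Xt ω + W ω)) / b) * K ((x - Xt ω) / b)
      - (K ((x - Xt ω) / b)) ^ 2) ∂μ|
      ≤ ∫ ω, |K ((x - (Xt ω + W ω)) / b) * K ((x - Xt ω) / b)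
        - (K ((x - Xt ω) / b)) ^ 2| ∂μ := by
    simpa [Real.norm_eq_abs] using norm_integral_le_integral_norm
      (μ := μ) (fun ω => K ((x - (Xt ω + W ω)) / b) * K ((x - Xt ω) / b)
        - (K ((x - Xt ω) / b)) ^ 2)
  have step2 : ∫ ω, |K ((x - (Xt ω + W ω)) / b) * K ((x - Xt ω) / b)
      - (K ((x - Xt ω) / b)) ^ 2| ∂μ ≤ ∫ ω, φ ω ∂μ := by
    refine integral_mono (hFint.sub hGint).abs hφint fun ω => ?_
    have e1 : K ((x - (Xt ω + W ω)) / b) * K ((x - Xt ω) / b) - (K ((x - Xt ω) / b)) ^ 2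
        = (K ((x - (Xt ω + W ω)) / b) - K ((x - Xt ω) / b)) * K ((x - Xt ω) / b) := by ring
    show |K ((x - (Xt ω + W ω)) / b) * K ((x - Xt ω) / b) - (K ((x - Xt ω) / b)) ^ 2| ≤ φ ω
    rw [e1, abs_mul, hφdef]
    refine mul_le_mul_of_nonneg_right ?_ (abs_nonneg _)
    have hd := hlip.dist_le_mul ((x - (Xt ω + W ω)) / b) ((x - Xt ω) / b)
    rw [Real.dist_eq, Real.dist_eq] at hd
    have e2 : (x - (Xt ω + W ω)) / b - (x - Xt ω) / b = -W ω / b := by ring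
    rw [e2, abs_div, abs_neg, abs_of_pos hb] at hd
    calc |K ((x - (Xt ω + W ω)) / b) - K ((x - Xt ω) / b)| ≤ (L : ℝ) * (|W ω| / b) := hd
      _ = (L : ℝ) / b * |W ω| := by ring
  have hind2 : IndepFun (fun ω => (L : ℝ) / b * |W ω|) (fun ω => h (Xt ω)) μ := by
    have hcomp := hindep.symm.comp (φ := fun w : ℝ => (L : ℝ) / b * |w|) (ψ := h)
      (measurable_id.abs.const_mul _) hhcont.measurable
    exact hcomp
  have step3 : ∫ ω, φ ω ∂μ = ((L : ℝ) / b * ∫ ω, |W ω| ∂μ) * ∫ ω, h (Xt ω) ∂μ := by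
    have hmul := hind2.integral_mul_eq_mul_integral
      ((measurable_id.abs.const_mul ((L : ℝ) / b)).comp hW).aestronglyMeasurable
      (hhcont.measurable.comp hXt).aestronglyMeasurable
    have e3 : ∫ ω, φ ω ∂μ
        = integral μ ((fun ω => (L : ℝ) / b * |W ω|) * fun ω => h (Xt ω)) := rfl
    rw [e3, hmul, integral_const_mul]
  calc |∫ ω, (K ((x - (Xt ω + W ω)) / b) * K ((x - Xt ω) / b)
        - (K ((x - Xt ω) / b)) ^ 2) ∂μ|
      ≤ ∫ ω, |K ((x - (Xt ω + W ω)) / b) * K ((x - Xt ω) / b)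
        - (K ((x - Xt ω) / b)) ^ 2| ∂μ := step1
    _ ≤ ∫ ω, φ ω ∂μ := step2
    _ = ((L : ℝ) / b * ∫ ω, |W ω| ∂μ) * ∫ ω, h (Xt ω) ∂μ := step3
    _ ≤ ((L : ℝ) / b * ∫ ω, |W ω| ∂μ) * (pbar * (b * ∫ y, |K y|)) :=
        mul_le_mul_of_nonneg_left hB (mul_nonneg (by positivity) hWnn)
    _ = (L : ℝ) * ((∫ ω, |W ω| ∂μ) / b) * b * pbar * ∫ y, |K y| := by ring
end

section
/- Let D, T be independent real random variables and K : ℝ → ℝ bounded integrable, b > 0, x ∈ ℝ. Suppose T has a c-Lipschitz density p_T. Define Z = b^{-1/2} K((x − D − T)/b). Then ‖E(Z | D) − E Z‖_α ≤ 2c · (∫|K(t)|dt) · b^{1/2} · ‖D‖_α for any α ≥ 1 with E|D|^α < ∞. -/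
open MeasureTheory ProbabilityTheory Filter
open scoped ENNReal NNReal

/-- bounded measurable functions are integrable on finite measure spaces -/
lemma aux_integrable_of_bound {α : Type*} [MeasurableSpace α] (μ : Measure α)
    [IsFiniteMeasure μ] (f : α → ℝ) (C : ℝ) (hf : AEStronglyMeasurable f μ)
    (h : ∀ a, |f a| ≤ C) : Integrable f μ :=
  Integrable.mono' (integrable_const C) hf
    (Eventually.of_forall fun a => by simpa [Real.norm_eq_abs] using h a)

/-- For independent `D, T` with `T` having a `c`-Lipschitz density, a bounded integrable
kernel `K`, and `Z = b^{-1/2} K((x - D - T)/b)`: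
`‖E(Z | D) - E Z‖_α ≤ 2 c (∫|K|) √b ‖D‖_α` for `α ≥ 1` with `E|D|^α < ∞`. -/
theorem stmt16 {Ω : Type*} [mΩ : MeasurableSpace Ω] (μ : Measure Ω) [IsProbabilityMeasure μ]
    (D T : Ω → ℝ) (hD : Measurable D) (hT : Measurable T)
    (hindep : IndepFun D T μ)
    (K : ℝ → ℝ) (hKint : Integrable K) (hKbd : ∃ M : ℝ, ∀ t, |K t| ≤ M)
    (pT : ℝ → ℝ) (c : NNReal) (hlip : LipschitzWith c pT)
    (hdens : ∀ s : Set ℝ, MeasurableSet s →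
      μ (T ⁻¹' s) = ENNReal.ofReal (∫ y in s, pT y))
    (b x : ℝ) (hb : 0 < b) (α : ℝ) (hα : 1 ≤ α)
    (hDα : Integrable (fun ω => |D ω| ^ α) μ) :
    eLpNorm (fun ω =>
        (MeasureTheory.condExp (MeasurableSpace.comap D Real.measurableSpace) μ
            (fun ω' => (1 / Real.sqrt b) * K ((x - D ω' - T ω') / b)) ω)
          - ∫ ω', (1 / Real.sqrt b) * K ((x - D ω' - T ω') / b) ∂μ)
      (ENNReal.ofReal α) μ
      ≤ ENNReal.ofReal (2 * (c : ℝ) * (∫ t, |K t|) * Real.sqrt b)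
          * eLpNorm D (ENNReal.ofReal α) μ := by
  classical
  obtain ⟨M, hM⟩ := hKbd
  have hM0 : 0 ≤ M := (abs_nonneg (K 0)).trans (hM 0)
  have hb0 : b ≠ 0 := ne_of_gt hb
  have hsb : 0 < Real.sqrt b := Real.sqrt_pos.mpr hb
  have hm : MeasurableSpace.comap D Real.measurableSpace ≤ mΩ := hD.comap_le
  -- measurable bounded representative of K
  set K₀ : ℝ → ℝ := hKint.aestronglyMeasurable.mk K with hK₀def
  have hK₀meas : Measurable K₀ := hKint.aestronglyMeasurable.stronglyMeasurable_mk.measurable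
  set K' : ℝ → ℝ := fun t => if |K₀ t| ≤ M then K₀ t else 0 with hK'def
  have hK'meas : Measurable K' := by
    refine Measurable.ite ?_ hK₀meas measurable_const
    exact measurableSet_le hK₀meas.abs measurable_const
  have hKK' : K =ᵐ[(volume : Measure ℝ)] K' := by
    filter_upwards [hKint.aestronglyMeasurable.ae_eq_mk] with t ht
    have hle : |K₀ t| ≤ M := by rw [hK₀def, ← ht]; exact hM t
    show K t = (if |K₀ t| ≤ M then K₀ t else 0)
    rw [if_pos hle, hK₀def, ← ht]
  have hK'bd : ∀ t, |K' t| ≤ M := by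
    intro t
    simp only [hK'def]
    split_ifs with h
    · exact h
    · simpa using hM0
  have hK'int : Integrable K' := hKint.congr hKK'
  have hKabs : (∫ t, |K t|) = ∫ t, |K' t| :=
    integral_congr_ae (hKK'.mono fun t ht => by simp only [ht])
  have hK'abs_nonneg : 0 ≤ ∫ t, |K' t| := integral_nonneg fun t => abs_nonneg _
  -- facts about pT
  have hpT_cont : Continuous pT := hlip.continuous
  have hpT_meas : Measurable pT := hpT_cont.measurable
  have huniv : (1 : ℝ≥0∞) = ENNReal.ofReal (∫ y, pT y) := by
    simpa using hdens Set.univ MeasurableSet.univ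
  have hpT_int : Integrable pT := by
    by_contra h
    rw [integral_undef h] at huniv
    simp at huniv
  have hpT_one : (∫ y, pT y) = 1 := by
    rcases le_or_gt 0 (∫ y, pT y) with h | h
    · have := congrArg ENNReal.toReal huniv
      simpa [ENNReal.toReal_ofReal h] using this.symm
    · rw [ENNReal.ofReal_eq_zero.mpr h.le] at huniv; simp at huniv
  have hpT_nn : 0 ≤ᵐ[(volume : Measure ℝ)] pT := by
    set s : Set ℝ := {y | pT y < 0} with hsdef
    have hs_meas : MeasurableSet s := measurableSet_lt hpT_meas measurable_const
    have hs_int_zero : (∫ y in s, pT y) = 0 := by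
      have h1 : (∫ y in s, pT y) ≤ 0 :=
        setIntegral_nonpos hs_meas fun y hy => le_of_lt hy
      have hsplit : (∫ y in s, pT y) + (∫ y in sᶜ, pT y) = 1 := by
        rw [integral_add_compl hs_meas hpT_int, hpT_one]
      have hdisj : μ (T ⁻¹' s) + μ (T ⁻¹' sᶜ) = 1 := by
        rw [← measure_union ((disjoint_compl_right (a := s)).preimage T) (hT hs_meas.compl),
          ← Set.preimage_union, Set.union_compl_self, Set.preimage_univ, measure_univ]
      rw [hdens s hs_meas, hdens sᶜ hs_meas.compl,
        ENNReal.ofReal_eq_zero.mpr h1, zero_add] at hdisj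
      have hcompl : (∫ y in sᶜ, pT y) = 1 := by
        rcases le_or_gt 0 (∫ y in sᶜ, pT y) with h | h
        · have := congrArg ENNReal.toReal hdisj
          simpa [ENNReal.toReal_ofReal h] using this
        · rw [ENNReal.ofReal_eq_zero.mpr h.le] at hdisj; simp at hdisj
      linarith
    -- conclude volume s = 0
    have hneg_int : Integrable (fun y => -pT y) (volume.restrict s) :=
      (hpT_int.restrict).neg
    have hzero : (∫ y in s, -pT y) = 0 := by
      rw [integral_neg, hs_int_zero, neg_zero]
    have hnn : 0 ≤ᵐ[volume.restrict s] fun y => -pT y := by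
      filter_upwards [ae_restrict_mem hs_meas] with y hy
      simp only [hsdef, Set.mem_setOf_eq] at hy
      simp only [Pi.zero_apply]
      linarith
    have hae0 : (fun y => -pT y) =ᵐ[volume.restrict s] 0 := by
      refine (integral_eq_zero_iff_of_nonneg_ae hnn hneg_int).mp hzero
    have hfalse : ∀ᵐ y ∂(volume.restrict s), False := by
      filter_upwards [ae_restrict_mem hs_meas, hae0] with y hy hy0
      simp only [hsdef, Set.mem_setOf_eq] at hy
      simp only [Pi.zero_apply] at hy0
      linarith
    have hs0 : volume s = 0 := by
      have := Filter.eventually_false_iff_eq_bot.mp hfalse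
      rw [ae_eq_bot] at this
      exact Measure.restrict_eq_zero.mp this
    rw [Filter.EventuallyLE, ae_iff]
    refine measure_mono_null (fun y hy => ?_) hs0
    simp only [Set.mem_setOf_eq, Pi.zero_apply, not_le] at hy
    exact hy
  -- the law of T
  set τ : Measure ℝ := Measure.map T μ with hτdef
  haveI hτ_prob : IsProbabilityMeasure τ := Measure.isProbabilityMeasure_map hT.aemeasurable
  have hτ_eq : τ = volume.withDensity (fun y => ENNReal.ofReal (pT y)) := by
    ext s hs
    rw [hτdef, Measure.map_apply hT hs, hdens s hs, withDensity_apply _ hs,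
      ofReal_integral_eq_lintegral_ofReal hpT_int.integrableOn
        (ae_restrict_of_ae hpT_nn)]
  have hτ_ac : τ ≪ (volume : Measure ℝ) := by
    rw [hτ_eq]; exact withDensity_absolutelyContinuous _ _
  have hτ_integral : ∀ f : ℝ → ℝ, (∫ y, f y ∂τ) = ∫ y, pT y * f y := by
    intro f
    rw [hτ_eq]
    have hmeq : (fun y => ENNReal.ofReal (pT y))
        = fun y => ((fun z => (pT z).toNNReal) y : ℝ≥0∞) := rfl
    rw [hmeq, integral_withDensity_eq_integral_smul (f := fun z => (pT z).toNNReal)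
      (by exact measurable_real_toNNReal.comp hpT_meas) f]
    refine integral_congr_ae ?_
    filter_upwards [hpT_nn] with y hy
    simp [NNReal.smul_def, Real.coe_toNNReal _ hy]
  -- the law of D
  set ν : Measure ℝ := Measure.map D μ with hνdef
  haveI hν_prob : IsProbabilityMeasure ν := Measure.isProbabilityMeasure_map hD.aemeasurable
  have hmap : Measure.map (fun ω => (D ω, T ω)) μ = ν.prod τ :=
    (indepFun_iff_map_prod_eq_prod_map_map hD.aemeasurable hT.aemeasurable).mp hindep
  -- Z and its measurable version Z'
  set Z : Ω → ℝ := fun ω => (1 / Real.sqrt b) * K ((x - D ω - T ω) / b) with hZdef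
  set Z' : Ω → ℝ := fun ω => (1 / Real.sqrt b) * K' ((x - D ω - T ω) / b) with hZ'def
  have hsb_inv_nonneg : 0 ≤ 1 / Real.sqrt b := by positivity
  have hZ'meas : Measurable Z' :=
    measurable_const.mul (hK'meas.comp (((measurable_const.sub hD).sub hT).div_const b))
  have hZ'bd : ∀ ω, |Z' ω| ≤ (1 / Real.sqrt b) * M := fun ω => by
    rw [hZ'def, abs_mul, abs_of_nonneg hsb_inv_nonneg]
    exact mul_le_mul_of_nonneg_left (hK'bd _) hsb_inv_nonneg
  have hZ'int : Integrable Z' μ :=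
    aux_integrable_of_bound μ Z' _ hZ'meas.aestronglyMeasurable hZ'bd
  -- Z = Z' almost everywhere
  have hZZ' : Z =ᵐ[μ] Z' := by
    obtain ⟨N, hNsub, hNmeas, hNnull⟩ :=
      exists_measurable_superset_of_null (ae_iff.mp hKK')
    set A₂ : Set ℝ := (fun u : ℝ => b⁻¹ * u) ⁻¹' N with hA₂def
    have hA₂meas : MeasurableSet A₂ := hNmeas.preimage (measurable_const_mul _)
    have hA₂null : volume A₂ = 0 := by
      rw [hA₂def, Real.volume_preimage_mul_left (inv_ne_zero hb0), hNnull, mul_zero]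
    set S : Set (ℝ × ℝ) := {p : ℝ × ℝ | (x - p.1) - p.2 ∈ A₂} with hSdef
    have hSmeas : MeasurableSet S :=
      hA₂meas.preimage ((measurable_const.sub measurable_fst).sub measurable_snd)
    have hprod : (ν.prod τ) S = 0 := by
      rw [Measure.measure_prod_null hSmeas]
      refine Eventually.of_forall fun d => ?_
      show τ ((fun t : ℝ => (x - d) - t) ⁻¹' A₂) = 0
      refine hτ_ac ?_
      rw [(Measure.measurePreserving_sub_left volume (x - d)).measure_preimage
        hA₂meas.nullMeasurableSet]
      exact hA₂null
    have hμS : μ ((fun ω => (D ω, T ω)) ⁻¹' S) = 0 := by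
      rw [← Measure.map_apply (hD.prodMk hT) hSmeas, hmap]
      exact hprod
    refine ae_iff.mpr (measure_mono_null (fun ω hω => ?_) hμS)
    simp only [Set.mem_setOf_eq] at hω
    show (x - D ω) - T ω ∈ A₂
    by_contra hmem
    apply hω
    have hKw : K ((x - D ω - T ω) / b) = K' ((x - D ω - T ω) / b) := by
      by_contra hne
      refine hmem ?_
      have hmemN : ((x - D ω - T ω) / b) ∈ N := hNsub hne
      show b⁻¹ * ((x - D ω) - T ω) ∈ N
      rw [div_eq_inv_mul] at hmemN
      exact hmemN
    show (1 / Real.sqrt b) * K ((x - D ω - T ω) / b)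
        = (1 / Real.sqrt b) * K' ((x - D ω - T ω) / b)
    rw [hKw]
  -- the function g
  set g : ℝ → ℝ := fun d => ∫ t, (1 / Real.sqrt b) * K' ((x - d - t) / b) ∂τ with hgdef
  have hg_meas_aux : ∀ d : ℝ, Measurable fun t : ℝ => (1 / Real.sqrt b) * K' ((x - d - t) / b) :=
    fun d => measurable_const.mul
      (hK'meas.comp (((measurable_const.sub measurable_id).div_const b)))
  have hg_bd : ∀ d, |g d| ≤ (1 / Real.sqrt b) * M := by
    intro d
    have := norm_integral_le_of_norm_le_const (μ := τ)
      (f := fun t => (1 / Real.sqrt b) * K' ((x - d - t) / b))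
      (C := (1 / Real.sqrt b) * M)
      (Eventually.of_forall fun t => by
        rw [Real.norm_eq_abs, abs_mul, abs_of_nonneg hsb_inv_nonneg]
        exact mul_le_mul_of_nonneg_left (hK'bd _) hsb_inv_nonneg)
    simpa [hgdef, Real.norm_eq_abs, measure_univ] using this
  -- integrability of the shifted products
  set P : ℝ → ℝ → ℝ := fun d s => pT (x - d - b * s) * K' s with hPdef
  have hP_meas : ∀ d, Measurable (P d) := fun d =>
    (hpT_meas.comp (measurable_const.sub (measurable_id.const_mul b))).mul hK'meas
  have hP_int : ∀ d, Integrable (P d) := by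
    intro d
    have hbase : Integrable fun s : ℝ => pT (x - d - b * s) := by
      have h1 : Integrable fun u : ℝ => pT (x - d - u) :=
        hpT_int.comp_sub_left (x - d)
      exact (integrable_comp_mul_left_iff (fun u : ℝ => pT (x - d - u)) hb0).mpr h1
    refine Integrable.mono' (hbase.abs.mul_const M) (hP_meas d).aestronglyMeasurable
      (Eventually.of_forall fun s => ?_)
    rw [Real.norm_eq_abs, hPdef, abs_mul]
    exact mul_le_mul_of_nonneg_left (hK'bd s) (abs_nonneg _)
  -- change of variables: g d = √b ∫ P d
  have hg_repr : ∀ d : ℝ, g d = Real.sqrt b * ∫ s, P d s := by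
    intro d
    have h1 : g d = ∫ y, pT y * ((1 / Real.sqrt b) * K' ((x - d - y) / b)) :=
      hτ_integral _
    have h2 : (fun y => pT y * ((1 / Real.sqrt b) * K' ((x - d - y) / b)))
        = fun y => (1 / Real.sqrt b) * (pT y * K' ((x - d - y) / b)) := by
      funext y; ring
    rw [h1, h2, integral_const_mul]
    have h3 : (fun y : ℝ => pT y * K' ((x - d - y) / b))
        = fun y : ℝ => (fun u : ℝ => pT (x - d - u) * K' (u / b)) ((x - d) - y) := by
      funext y
      have : x - d - (x - d - y) = y := by ring
      simp only [this]
    rw [h3, integral_sub_left_eq_self (fun u : ℝ => pT (x - d - u) * K' (u / b))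
      volume (x - d)]
    have h4 : (fun u : ℝ => pT (x - d - u) * K' (u / b))
        = fun u : ℝ => (fun s : ℝ => pT (x - d - b * s) * K' s) (u / b) := by
      funext u
      show pT (x - d - u) * K' (u / b) = pT (x - d - b * (u / b)) * K' (u / b)
      rw [mul_div_cancel₀ u hb0]
    rw [h4, Measure.integral_comp_div (fun s : ℝ => pT (x - d - b * s) * K' s) b,
      abs_of_pos hb, smul_eq_mul, ← mul_assoc]
    have h5 : 1 / Real.sqrt b * b = Real.sqrt b := by
      rw [div_mul_eq_mul_div, one_mul, Real.div_sqrt]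
    rw [h5, hPdef]
  -- Lipschitz estimate for g
  set L : ℝ := (c : ℝ) * (∫ t, |K' t|) * Real.sqrt b with hLdef
  have hL0 : 0 ≤ L := by
    apply mul_nonneg (mul_nonneg c.coe_nonneg hK'abs_nonneg) (Real.sqrt_nonneg b)
  have hg_lip : ∀ d d', |g d - g d'| ≤ L * |d - d'| := by
    intro d d'
    rw [hg_repr d, hg_repr d', ← mul_sub, abs_mul,
      abs_of_nonneg (Real.sqrt_nonneg b), ← integral_sub (hP_int d) (hP_int d')]
    have hpoint : ∀ s, |P d s - P d' s| ≤ ((c : ℝ) * |d - d'|) * |K' s| := by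
      intro s
      rw [hPdef]
      have : pT (x - d - b * s) * K' s - pT (x - d' - b * s) * K' s
          = (pT (x - d - b * s) - pT (x - d' - b * s)) * K' s := by ring
      rw [this, abs_mul]
      refine mul_le_mul_of_nonneg_right ?_ (abs_nonneg _)
      have hdist := hlip.dist_le_mul (x - d - b * s) (x - d' - b * s)
      rw [Real.dist_eq, Real.dist_eq] at hdist
      have h1 : x - d - b * s - (x - d' - b * s) = d' - d := by ring
      rw [h1, abs_sub_comm d' d] at hdist
      exact hdist
    have habs : |∫ s, (P d s - P d' s)| ≤ ∫ s, ((c : ℝ) * |d - d'|) * |K' s| := by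
      have h0 : |∫ s, (P d s - P d' s)| ≤ ∫ s, |P d s - P d' s| := by
        simpa [Real.norm_eq_abs] using
          norm_integral_le_integral_norm (fun s => P d s - P d' s)
      refine h0.trans ?_
      refine integral_mono_of_nonneg (Eventually.of_forall fun s => abs_nonneg _)
        ((hK'int.abs.const_mul _)) (Eventually.of_forall fun s => hpoint s)
    calc Real.sqrt b * |∫ s, (P d s - P d' s)|
        ≤ Real.sqrt b * (((c : ℝ) * |d - d'|) * ∫ s, |K' s|) := by
          refine mul_le_mul_of_nonneg_left (habs.trans ?_) (Real.sqrt_nonneg b)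
          rw [integral_const_mul]
      _ = L * |d - d'| := by rw [hLdef]; ring
  have hg_cont : Continuous g := by
    refine LipschitzWith.continuous (K := L.toNNReal)
      (LipschitzWith.of_dist_le_mul fun d d' => ?_)
    rw [Real.dist_eq, Real.dist_eq, Real.coe_toNNReal _ hL0]
    exact hg_lip d d'
  have hg_measurable : Measurable g := hg_cont.measurable
  -- integrability of g ∘ D
  have hgD_meas : Measurable fun ω => g (D ω) := hg_measurable.comp hD
  have hgD_int : Integrable (fun ω => g (D ω)) μ :=
    aux_integrable_of_bound μ _ ((1 / Real.sqrt b) * M) hgD_meas.aestronglyMeasurable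
      fun ω => hg_bd (D ω)
  -- conditional expectation identification
  have hcond : (fun ω => g (D ω)) =ᵐ[μ] μ[Z' | MeasurableSpace.comap D Real.measurableSpace] := by
    refine ae_eq_condExp_of_forall_setIntegral_eq hm hZ'int ?_ ?_ ?_
    · intro s _ _
      exact hgD_int.integrableOn
    · rintro s ⟨A, hA, rfl⟩ -
      -- ∫_{D⁻¹A} g(D) = ∫_{D⁻¹A} Z'
      set u : ℝ × ℝ → ℝ := fun p =>
        Set.indicator A (fun _ => (1 : ℝ)) p.1 * ((1 / Real.sqrt b) * K' ((x - p.1 - p.2) / b))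
        with hudef
      have hu_meas : Measurable u := by
        refine Measurable.mul ?_ ?_
        · exact (measurable_one.indicator hA).comp measurable_fst
        · exact measurable_const.mul (hK'meas.comp
            (((measurable_const.sub measurable_fst).sub measurable_snd).div_const b))
      have hu_bd : ∀ p, |u p| ≤ (1 / Real.sqrt b) * M := by
        intro p
        rw [hudef, abs_mul]
        have h1 : |Set.indicator A (fun _ => (1 : ℝ)) p.1| ≤ 1 := by
          by_cases hp : p.1 ∈ A <;> simp [hp]
        have h2 : |(1 / Real.sqrt b) * K' ((x - p.1 - p.2) / b)| ≤ (1 / Real.sqrt b) * M := by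
          rw [abs_mul, abs_of_nonneg hsb_inv_nonneg]
          exact mul_le_mul_of_nonneg_left (hK'bd _) hsb_inv_nonneg
        calc |Set.indicator A (fun _ => (1:ℝ)) p.1| * |(1 / Real.sqrt b) * K' ((x - p.1 - p.2) / b)|
            ≤ 1 * ((1 / Real.sqrt b) * M) :=
              mul_le_mul h1 h2 (abs_nonneg _) zero_le_one
          _ = (1 / Real.sqrt b) * M := one_mul _
      have hu_int : Integrable u (ν.prod τ) :=
        aux_integrable_of_bound _ u _ hu_meas.aestronglyMeasurable hu_bd
      have hstep1 : (∫ ω in D ⁻¹' A, Z' ω ∂μ) = ∫ ω, u (D ω, T ω) ∂μ := by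
        rw [← integral_indicator (hD hA)]
        refine integral_congr_ae (Eventually.of_forall fun ω => ?_)
        by_cases hω : D ω ∈ A
        · simp [hudef, Set.indicator_of_mem, hω, hZ'def]
        · simp [hudef, Set.indicator_of_notMem, hω]
      have hstep2 : (∫ ω, u (D ω, T ω) ∂μ) = ∫ p, u p ∂(ν.prod τ) := by
        rw [← hmap, integral_map (hD.prodMk hT).aemeasurable]
        exact (hu_meas.aestronglyMeasurable)
      have hstep3 : (∫ p, u p ∂(ν.prod τ))
          = ∫ d, Set.indicator A (fun _ => (1:ℝ)) d * g d ∂ν := by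
        rw [integral_prod u hu_int]
        refine integral_congr_ae (Eventually.of_forall fun d => ?_)
        simp only [hudef]
        rw [integral_const_mul]
      have hstep4 : (∫ d, Set.indicator A (fun _ => (1:ℝ)) d * g d ∂ν)
          = ∫ d in A, g d ∂ν := by
        rw [← integral_indicator hA]
        refine integral_congr_ae (Eventually.of_forall fun d => ?_)
        by_cases hd : d ∈ A
        · simp [Set.indicator_of_mem, hd]
        · simp [Set.indicator_of_notMem, hd]
      have hstep5 : (∫ d in A, g d ∂ν) = ∫ ω in D ⁻¹' A, g (D ω) ∂μ := by
        rw [hνdef]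
        exact setIntegral_map hA hg_measurable.aestronglyMeasurable hD.aemeasurable
      exact hstep5.symm.trans
        (hstep4.symm.trans (hstep3.symm.trans (hstep2.symm.trans hstep1.symm)))
    · refine StronglyMeasurable.aestronglyMeasurable ?_
      refine Measurable.stronglyMeasurable ?_
      exact hg_measurable.comp (Measurable.of_comap_le le_rfl)
  -- equalities of integrals
  have hintZ : (∫ ω, Z ω ∂μ) = ∫ ω, Z' ω ∂μ := integral_congr_ae hZZ'
  have hintZ' : (∫ ω, Z' ω ∂μ) = ∫ ω, g (D ω) ∂μ := by
    rw [← integral_condExp (f := Z') hm]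
    exact (integral_congr_ae hcond).symm
  have hcond_eq : μ[Z | MeasurableSpace.comap D Real.measurableSpace] =ᵐ[μ] μ[Z' | MeasurableSpace.comap D Real.measurableSpace] := condExp_congr_ae hZZ'
  -- integrability of D
  have hD_int : Integrable D μ := by
    refine Integrable.mono' ((integrable_const (1:ℝ)).add hDα) hD.aestronglyMeasurable
      (Eventually.of_forall fun ω => ?_)
    rw [Real.norm_eq_abs]
    simp only [Pi.add_apply]
    rcases le_or_gt (|D ω|) 1 with h | h
    · have : (0:ℝ) ≤ |D ω| ^ α := Real.rpow_nonneg (abs_nonneg _) α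
      linarith
    · have h2 : |D ω| ^ (1:ℝ) ≤ |D ω| ^ α :=
        Real.rpow_le_rpow_of_exponent_le h.le hα
      rw [Real.rpow_one] at h2
      linarith
  -- pointwise bound
  set I₁ : ℝ := ∫ ω, |D ω| ∂μ with hI₁def
  have hI₁nn : 0 ≤ I₁ := integral_nonneg fun ω => abs_nonneg _
  have hDabs_int : Integrable (fun ω => |D ω|) μ := hD_int.abs
  have hbound : ∀ ω, |g (D ω) - ∫ ω', g (D ω') ∂μ| ≤ L * |D ω| + L * I₁ := by
    intro ω
    have h1 : g (D ω) - (∫ ω', g (D ω') ∂μ) = ∫ ω', (g (D ω) - g (D ω')) ∂μ := by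
      rw [integral_sub (integrable_const _) hgD_int, integral_const, Measure.real, measure_univ,
        ENNReal.toReal_one, one_smul]
    rw [h1]
    calc |∫ ω', (g (D ω) - g (D ω')) ∂μ|
        ≤ ∫ ω', |g (D ω) - g (D ω')| ∂μ := by
          simpa [Real.norm_eq_abs] using
            norm_integral_le_integral_norm (fun ω' => g (D ω) - g (D ω'))
      _ ≤ ∫ ω', (L * |D ω| + L * |D ω'|) ∂μ := by
          refine integral_mono_of_nonneg (Eventually.of_forall fun ω' => abs_nonneg _)
            ((integrable_const _).add (hDabs_int.const_mul L))
            (Eventually.of_forall fun ω' => ?_)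
          refine (hg_lip (D ω) (D ω')).trans ?_
          have h3 : |D ω - D ω'| ≤ |D ω| + |D ω'| := by
            simpa [Real.norm_eq_abs] using norm_sub_le (D ω) (D ω')
          calc L * |D ω - D ω'| ≤ L * (|D ω| + |D ω'|) :=
                mul_le_mul_of_nonneg_left h3 hL0
            _ = L * |D ω| + L * |D ω'| := by ring
      _ = L * |D ω| + L * I₁ := by
          rw [integral_add (integrable_const _) (hDabs_int.const_mul L),
            integral_const, Measure.real, measure_univ, ENNReal.toReal_one, one_smul,
            integral_const_mul, hI₁def]
  -- the eLpNorm estimates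
  set p : ℝ≥0∞ := ENNReal.ofReal α with hpdef
  have hp1 : 1 ≤ p := ENNReal.one_le_ofReal.mpr hα
  have hp0 : p ≠ 0 := fun h => by simp [h] at hp1
  have hμ0 : μ ≠ 0 := IsProbabilityMeasure.ne_zero μ
  have key1 : eLpNorm (fun ω => (μ[Z | MeasurableSpace.comap D Real.measurableSpace]) ω - ∫ ω', Z ω' ∂μ) p μ
      = eLpNorm (fun ω => g (D ω) - ∫ ω', g (D ω') ∂μ) p μ := by
    refine eLpNorm_congr_ae ?_
    filter_upwards [hcond_eq, hcond] with ω h1 h2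
    rw [h1, ← h2, hintZ, hintZ']
  have key2 : eLpNorm (fun ω => g (D ω) - ∫ ω', g (D ω') ∂μ) p μ
      ≤ eLpNorm (fun ω => L * |D ω| + L * I₁) p μ := by
    refine eLpNorm_mono fun ω => ?_
    rw [Real.norm_eq_abs, Real.norm_eq_abs]
    refine (hbound ω).trans (le_abs_self _)
  have key3 : eLpNorm (fun ω => L * |D ω| + L * I₁) p μ
      ≤ eLpNorm (fun ω => L * |D ω|) p μ + eLpNorm (fun _ : Ω => L * I₁) p μ := by
    exact eLpNorm_add_le ((hD.abs.const_mul L).aestronglyMeasurable)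
      aestronglyMeasurable_const hp1
  have key4 : eLpNorm (fun ω => L * |D ω|) p μ = ENNReal.ofReal L * eLpNorm D p μ := by
    have : (fun ω => L * |D ω|) = L • (fun ω => |D ω|) := by
      funext ω; simp [smul_eq_mul]
    rw [this, eLpNorm_const_smul]
    congr 1
    · rw [← ofReal_norm_eq_enorm, Real.norm_eq_abs, abs_of_nonneg hL0]
    · have : (fun ω => |D ω|) = fun ω => ‖D ω‖ := by
        funext ω; rw [Real.norm_eq_abs]
      rw [this, eLpNorm_norm]
  have key5 : eLpNorm (fun _ : Ω => L * I₁) p μ ≤ ENNReal.ofReal L * eLpNorm D p μ := by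
    rw [eLpNorm_const _ hp0 hμ0, measure_univ, ENNReal.one_rpow, mul_one]
    have h1 : ‖L * I₁‖ₑ = ENNReal.ofReal L * ENNReal.ofReal I₁ := by
      rw [← ofReal_norm_eq_enorm, Real.norm_eq_abs,
        abs_of_nonneg (mul_nonneg hL0 hI₁nn), ENNReal.ofReal_mul hL0]
    rw [h1]
    refine mul_le_mul_right ?_ _
    have h2 : ENNReal.ofReal I₁ = eLpNorm D 1 μ := by
      rw [eLpNorm_one_eq_lintegral_enorm,
        ← ofReal_integral_norm_eq_lintegral_enorm hD_int]
      congr 1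
    rw [h2]
    exact eLpNorm_le_eLpNorm_of_exponent_le hp1 hD.aestronglyMeasurable
  have hfinal : eLpNorm (fun ω => (μ[Z | MeasurableSpace.comap D Real.measurableSpace]) ω - ∫ ω', Z ω' ∂μ) p μ
      ≤ ENNReal.ofReal (2 * L) * eLpNorm D p μ := by
    rw [key1]
    refine key2.trans (key3.trans ?_)
    rw [key4]
    calc ENNReal.ofReal L * eLpNorm D p μ + eLpNorm (fun _ : Ω => L * I₁) p μ
        ≤ ENNReal.ofReal L * eLpNorm D p μ + ENNReal.ofReal L * eLpNorm D p μ :=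
          add_le_add_right key5 _
      _ = ENNReal.ofReal (2 * L) * eLpNorm D p μ := by
          rw [← two_mul, ← mul_assoc]
          congr 1
          rw [ENNReal.ofReal_mul (by norm_num : (0:ℝ) ≤ 2)]
          congr 1
          norm_num
  have hconst : 2 * L = 2 * (c : ℝ) * (∫ t, |K t|) * Real.sqrt b := by
    rw [hLdef, hKabs]; ring
  rw [← hconst]
  exact hfinal
end
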